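/- Let A be a block linear map on ℂ × ℂⁿ and λ > 0 such that Re⟨Aξ, ξ⟩ ≥ λ‖ξ‖² for all ξ ∈ ℂ^{1+n} (strict accretivity). Then Re a ≥ λ, so a ≠ 0 and the hat transform Â is defined, and Â is strictly accretive with constant λ/(1 + ‖A‖²): Re⟨Âη, η⟩ ≥ (λ/(1 + ‖A‖²)) ‖η‖² for all η ∈ ℂ^{1+n}, where ‖A‖ denotes the operator norm of A. -/

import Mathlib

open Matrix

/-- The block linear map `A(ξ_⊥, ξ_∥) = (a ξ_⊥ + b·ξ_∥, ξ_⊥ c + d ξ_∥)`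
on `ℂ × ℂⁿ`. -/
noncomputable def blockMap {n : ℕ} (a : ℂ) (b c : Fin n → ℂ)
    (d : Matrix (Fin n) (Fin n) ℂ) (ξ : ℂ × (Fin n → ℂ)) : ℂ × (Fin n → ℂ) :=
  (a * ξ.1 + b ⬝ᵥ ξ.2, ξ.1 • c + d *ᵥ ξ.2)

/-- The hat transform
`Â(η_⊥, η_∥) = (a⁻¹η_⊥ - a⁻¹ b·η_∥, a⁻¹η_⊥ c + d η_∥ - a⁻¹(b·η_∥) c)`. -/
noncomputable def hatMap {n : ℕ} (a : ℂ) (b c : Fin n → ℂ)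
    (d : Matrix (Fin n) (Fin n) ℂ) (η : ℂ × (Fin n → ℂ)) : ℂ × (Fin n → ℂ) :=
  (a⁻¹ * η.1 - a⁻¹ * (b ⬝ᵥ η.2),
    (a⁻¹ * η.1) • c + d *ᵥ η.2 - (a⁻¹ * (b ⬝ᵥ η.2)) • c)

/-- The Hermitian inner product `⟨ξ, ζ⟩ = Σ_i ξ_i conj(ζ_i)` on `ℂ × ℂⁿ`
(conjugate-linear in the second variable). -/
noncomputable def herm {n : ℕ} (ξ ζ : ℂ × (Fin n → ℂ)) : ℂ :=
  ξ.1 * (starRingEnd ℂ) ζ.1 + ∑ j, ξ.2 j * (starRingEnd ℂ) (ζ.2 j)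

/-- The squared Euclidean norm `‖ξ‖² = Σ_i |ξ_i|²` on `ℂ × ℂⁿ`. -/
noncomputable def sqnorm {n : ℕ} (ξ : ℂ × (Fin n → ℂ)) : ℝ :=
  ‖ξ.1‖ ^ 2 + ∑ j, ‖ξ.2 j‖ ^ 2

/- STATEMENT 7: if `A` is strictly accretive with constant `λ > 0` then
`Re a ≥ λ`, so `a ≠ 0` and the hat transform is defined, and `Â` is
strictly accretive with constant `λ/(1 + ‖A‖²)`.  The operator norm
`‖A‖` is encoded by quantifying over all `Λ ≥ 0` bounding the operator,
i.e. all `Λ` with `‖Aξ‖² ≤ Λ²‖ξ‖²` for every `ξ` (the operator norm being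
the least such `Λ`). -/
theorem stmt7 {n : ℕ} (hn : 1 ≤ n) (a : ℂ) (b c : Fin n → ℂ)
    (d : Matrix (Fin n) (Fin n) ℂ) (lam Lam : ℝ) (hlam : 0 < lam) (hLam : 0 ≤ Lam)
    (hacc : ∀ ξ : ℂ × (Fin n → ℂ), lam * sqnorm ξ ≤ (herm (blockMap a b c d ξ) ξ).re)
    (hbound : ∀ ξ : ℂ × (Fin n → ℂ), sqnorm (blockMap a b c d ξ) ≤ Lam ^ 2 * sqnorm ξ) :
    lam ≤ a.re ∧ a ≠ 0 ∧
      ∀ η : ℂ × (Fin n → ℂ),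
        (lam / (1 + Lam ^ 2)) * sqnorm η ≤ (herm (hatMap a b c d η) η).re := by

  have ha : lam ≤ a.re := by
    have h := hacc (1, 0)
    simpa [blockMap, herm, sqnorm, dotProduct, Matrix.mulVec] using h
  have ha0 : a ≠ 0 := by
    intro h
    rw [h] at ha
    simp at ha
    linarith
  refine ⟨ha, ha0, fun η => ?_⟩
  set ξ : ℂ × (Fin n → ℂ) := (a⁻¹ * (η.1 - b ⬝ᵥ η.2), η.2) with hξ
  have h1 : (blockMap a b c d ξ).1 = η.1 := by
    simp only [blockMap, hξ]
    field_simp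
    ring
  have h1' : (hatMap a b c d η).1 = ξ.1 := by
    simp only [hatMap, hξ]
    ring
  have h2 : (hatMap a b c d η).2 = (blockMap a b c d ξ).2 := by
    funext j
    simp only [hatMap, blockMap, hξ, Pi.add_apply, Pi.sub_apply, Pi.smul_apply,
      smul_eq_mul]
    ring
  have hre : (herm (hatMap a b c d η) η).re = (herm (blockMap a b c d ξ) ξ).re := by
    simp only [herm, h1', h2]
    rw [← h1]
    have hξ2 : ξ.2 = η.2 := rfl
    rw [hξ2]
    simp [Complex.add_re, Complex.mul_re]
    ring
  have hpos : (0:ℝ) < 1 + Lam ^ 2 := by positivity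
  have hb := hbound ξ
  have hA1 : ‖(blockMap a b c d ξ).1‖ ^ 2 ≤ sqnorm (blockMap a b c d ξ) := by
    have : (0:ℝ) ≤ ∑ j, ‖(blockMap a b c d ξ).2 j‖ ^ 2 :=
      Finset.sum_nonneg fun j _ => sq_nonneg _
    simp only [sqnorm]
    linarith
  have hη2 : ∑ j, ‖η.2 j‖ ^ 2 ≤ sqnorm ξ := by
    have : (0:ℝ) ≤ ‖ξ.1‖ ^ 2 := sq_nonneg _
    simp only [sqnorm, hξ]
    linarith
  have hnorm : sqnorm η ≤ (1 + Lam ^ 2) * sqnorm ξ := by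
    have : sqnorm η = ‖(blockMap a b c d ξ).1‖ ^ 2 + ∑ j, ‖η.2 j‖ ^ 2 := by
      rw [h1]; rfl
    nlinarith
  calc (lam / (1 + Lam ^ 2)) * sqnorm η
      ≤ (lam / (1 + Lam ^ 2)) * ((1 + Lam ^ 2) * sqnorm ξ) := by
        apply mul_le_mul_of_nonneg_left hnorm (by positivity)
    _ = lam * sqnorm ξ := by field_simp
    _ ≤ (herm (blockMap a b c d ξ) ξ).re := hacc ξ
    _ = (herm (hatMap a b c d η) η).re := hre.symm
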